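/- With Y multiplication by x, Z the formal derivative on ℂ[x], H = Y∘Z, G = R(H)∘Z for a fixed polynomial R of degree d, q ∈ ℂ[X] with q(0) = 0 and deg q = l ≥ 1, and P_n^q = e^{q(G)}(x^n): the polynomials P_n^q are eigenfunctions of the differential operator L = H + q'(G)∘G (where q' is the formal derivative of q), namely L(P_n^q) = n·P_n^q for every n ∈ ℕ. -/

import Mathlib

open Polynomial Finset

noncomputable section

/-- `E` is the ℂ-algebra of ℂ-linear endomorphisms of `ℂ[x]`. -/
abbrev E := Module.End ℂ (Polynomial ℂ)

/-- `Y`: multiplication by `x`. -/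
def Yop : E := LinearMap.mulLeft ℂ (X : Polynomial ℂ)

/-- `Z`: the formal derivative. -/
def Zop : E := Polynomial.derivative

/-- `H = Y ∘ Z`. -/
def Hop : E := Yop * Zop

/-- `G = R(H) ∘ Z`. -/
def Gop (R : Polynomial ℂ) : E := aeval Hop R * Zop

/-- `P_n^q = e^{q(G)}(x^n)`, the exponential series being a finite sum
(all terms with `j > n` vanish). -/
def Pq (R q : Polynomial ℂ) (n : ℕ) : Polynomial ℂ :=
  ∑ j ∈ range (n + 1), (j.factorial : ℂ)⁻¹ • ((aeval (Gop R) q) ^ j) (X ^ n : Polynomial ℂ)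

lemma Hop_apply' (p : Polynomial ℂ) : Hop p = X * derivative p := rfl

lemma Gop_apply' (R p : Polynomial ℂ) : Gop R p = aeval Hop R (derivative p) := rfl

lemma comm_aeval (g : E) (p r : Polynomial ℂ) : Commute (aeval g p) (aeval g r) :=
  (Commute.all p r).map (aeval g)

lemma Hop_X_pow (n : ℕ) : Hop (X ^ n : Polynomial ℂ) = (n : ℂ) • X ^ n := by
  cases n with
  | zero => simp [Hop_apply']
  | succ k =>
    rw [Hop_apply', derivative_X_pow, smul_eq_C_mul]
    push_cast
    ring

lemma HZ' : Hop * Zop = Zop * Hop - Zop := by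
  refine LinearMap.ext fun p => ?_
  simp only [Module.End.mul_apply, LinearMap.sub_apply, Hop_apply', Zop, LinearMap.coe_mk,
    derivative_mul, derivative_X]
  ring

lemma Hop_comm_aevalH (R : Polynomial ℂ) : Commute (aeval Hop R) Hop := by
  simpa using ((Commute.all R (X : Polynomial ℂ)).map (aeval Hop))

lemma HG' (R : Polynomial ℂ) : Hop * Gop R = Gop R * Hop - Gop R := by
  unfold Gop
  rw [← mul_assoc, ← (Hop_comm_aevalH R).eq, mul_assoc, HZ', mul_sub, ← mul_assoc]

lemma Hg_pow (R : Polynomial ℂ) (j : ℕ) :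
    Hop * (Gop R) ^ j = (Gop R) ^ j * Hop - (j : ℂ) • (Gop R) ^ j := by
  induction j with
  | zero => simp
  | succ k ih =>
    rw [pow_succ', ← mul_assoc, HG' R, sub_mul, mul_assoc, ih]
    push_cast
    simp only [mul_sub, mul_smul_comm, add_smul, one_smul, ← mul_assoc, ← pow_succ']
    abel

lemma H_aeval_g (R p : Polynomial ℂ) :
    Hop * aeval (Gop R) p = aeval (Gop R) p * Hop - aeval (Gop R) (X * derivative p) := by
  induction p using Polynomial.induction_on with
  | C a => simp [Algebra.commutes]
  | add p r hp hr =>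
    simp only [derivative_add, mul_add, map_add, add_mul] at *
    rw [hp, hr]; abel
  | monomial j a _ =>
    simp only [derivative_mul, derivative_C, zero_mul, zero_add, derivative_X_pow, map_mul,
      aeval_C, aeval_X_pow, Nat.add_sub_cancel]
    rw [← mul_assoc, ← (Algebra.commutes a Hop), mul_assoc, Hg_pow]
    simp only [mul_sub, ← mul_assoc]
    congr 1
    rw [aeval_X, Algebra.smul_def, mul_assoc (Gop R), ← map_mul, ← Algebra.commutes,
      map_mul, mul_assoc, ← pow_succ', ← mul_assoc, Algebra.commutes a]

lemma H_Q_pow (R q : Polynomial ℂ) (j : ℕ) :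
    Hop * (aeval (Gop R) q) ^ (j + 1) = (aeval (Gop R) q) ^ (j + 1) * Hop
      - ((j + 1 : ℕ) : ℂ) • (aeval (Gop R) (X * derivative q) * (aeval (Gop R) q) ^ j) := by
  induction j with
  | zero =>
    simp only [zero_add, pow_one, pow_zero, mul_one, Nat.cast_one, one_smul]
    exact H_aeval_g R q
  | succ k ih =>
    set Q := aeval (Gop R) q with hQ
    set T := aeval (Gop R) (X * derivative q) with hT
    have hTQ : Commute Q T := comm_aeval _ _ _
    calc Hop * Q ^ (k + 2) = (Hop * Q) * Q ^ (k + 1) := by rw [mul_assoc, ← pow_succ']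
      _ = (Q * Hop - T) * Q ^ (k + 1) := by rw [H_aeval_g R q]
      _ = Q * (Hop * Q ^ (k + 1)) - T * Q ^ (k + 1) := by rw [sub_mul, mul_assoc]
      _ = Q * (Q ^ (k + 1) * Hop - ((k + 1 : ℕ) : ℂ) • (T * Q ^ k)) - T * Q ^ (k + 1) := by
          rw [ih]
      _ = Q ^ (k + 2) * Hop - ((k + 1 : ℕ) : ℂ) • (T * Q ^ (k + 1)) - T * Q ^ (k + 1) := by
          rw [mul_sub, ← mul_assoc, ← pow_succ', mul_smul_comm, ← mul_assoc, hTQ.eq,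
            mul_assoc, ← pow_succ']
      _ = Q ^ (k + 2) * Hop - ((k + 2 : ℕ) : ℂ) • (T * Q ^ (k + 1)) := by
          rw [sub_sub]
          congr 1
          push_cast
          module

lemma natDegree_Hop_le (p : Polynomial ℂ) : (Hop p).natDegree ≤ p.natDegree := by
  rw [Hop_apply']
  by_cases h : derivative p = 0
  · simp [h]
  · have h1 : p.natDegree ≠ 0 := by
      intro h0
      obtain ⟨a, rfl⟩ := Polynomial.natDegree_eq_zero.mp h0
      simp at h
    have := Polynomial.natDegree_derivative_le p
    calc (X * derivative p).natDegree ≤ 1 + (derivative p).natDegree := by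
          simpa using natDegree_mul_le (p := (X : Polynomial ℂ)) (q := derivative p)
      _ ≤ p.natDegree := by omega

lemma natDegree_Hop_pow_le (i : ℕ) :
    ∀ p : Polynomial ℂ, ((Hop ^ i) p).natDegree ≤ p.natDegree := by
  induction i with
  | zero => simp
  | succ k ih =>
    intro p
    rw [pow_succ, Module.End.mul_apply]
    exact le_trans (ih _) (natDegree_Hop_le p)

lemma natDegree_aevalH_le (R p : Polynomial ℂ) : ((aeval Hop R) p).natDegree ≤ p.natDegree := by
  rw [Polynomial.aeval_eq_sum_range]
  rw [LinearMap.coe_sum, Finset.sum_apply]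
  refine natDegree_sum_le_of_forall_le _ _ fun i _ => ?_
  rw [LinearMap.smul_apply]
  exact le_trans (natDegree_smul_le _ _) (natDegree_Hop_pow_le i p)

lemma natDegree_Gop_le (R p : Polynomial ℂ) : ((Gop R) p).natDegree ≤ p.natDegree - 1 := by
  rw [Gop_apply']
  exact le_trans (natDegree_aevalH_le R _) (Polynomial.natDegree_derivative_le p)

lemma Gop_pow_eq_zero (R : Polynomial ℂ) :
    ∀ m (p : Polynomial ℂ), p.natDegree ≤ m → ((Gop R) ^ (m + 1)) p = 0 := by
  intro m
  induction m with
  | zero =>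
    intro p hp
    obtain ⟨a, rfl⟩ := Polynomial.natDegree_eq_zero.mp (Nat.le_zero.mp hp)
    simp [Gop_apply']
  | succ k ih =>
    intro p hp
    rw [pow_succ, Module.End.mul_apply]
    refine ih _ ?_
    have := natDegree_Gop_le R p
    omega

/-- The polynomials `P_n^q` are eigenfunctions of `L = H + q'(G)∘G` with eigenvalue `n`. -/
theorem Pq_eigenfunction (R : Polynomial ℂ) (d : ℕ) (hR : R.natDegree = d)
    (q : Polynomial ℂ) (hq0 : q.eval 0 = 0) (l : ℕ) (hl : 1 ≤ l)
    (hql : q.natDegree = l) (n : ℕ) :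
    (Hop + aeval (Gop R) (derivative q) * Gop R) (Pq R q n) = (n : ℂ) • Pq R q n := by
  have hT' : aeval (Gop R) (derivative q) * Gop R = aeval (Gop R) (X * derivative q) := by
    rw [mul_comm X (derivative q), map_mul, aeval_X]
  set Q : E := aeval (Gop R) q with hQ
  set T : E := aeval (Gop R) (X * derivative q) with hT
  -- the top term vanishes
  obtain ⟨q₁, hq1⟩ : (X : Polynomial ℂ) ∣ q := by
    rw [X_dvd_iff, coeff_zero_eq_eval_zero, hq0]
  have hTQn : T ((Q ^ n) (X ^ n : Polynomial ℂ)) = 0 := by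
    have h1 : T * Q ^ n = aeval (Gop R) (derivative q * q₁ ^ n) * (Gop R) ^ (n + 1) := by
      rw [hT, hQ, ← map_pow, ← map_mul,
        show X * derivative q * q ^ n = derivative q * q₁ ^ n * X ^ (n + 1) from by
          rw [hq1]; ring,
        map_mul, map_pow, aeval_X]
    rw [← Module.End.mul_apply, h1, Module.End.mul_apply,
      Gop_pow_eq_zero R n _ (by simp), map_zero]
  -- per-term action of the operator
  have key : ∀ j : ℕ, (Hop + T) ((Q ^ j) (X ^ n : Polynomial ℂ)) =
      (n : ℂ) • ((Q ^ j) (X ^ n : Polynomial ℂ)) + T ((Q ^ j) (X ^ n : Polynomial ℂ))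
        - (j : ℂ) • T ((Q ^ (j - 1)) (X ^ n : Polynomial ℂ)) := by
    intro j
    rw [LinearMap.add_apply]
    cases j with
    | zero => simp [Hop_X_pow]
    | succ k =>
      have h2 := congrArg (fun (L : E) => L (X ^ n : Polynomial ℂ)) (H_Q_pow R q k)
      simp only [Module.End.mul_apply, LinearMap.sub_apply, LinearMap.smul_apply, ← hQ, ← hT]
        at h2
      rw [h2, Hop_X_pow, map_smul, Nat.add_sub_cancel]
      abel
  rw [hT']
  unfold Pq
  rw [map_sum]
  simp only [LinearMap.map_smul, ← hQ]
  rw [Finset.sum_congr rfl (fun j _ => by rw [key j])]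
  simp only [smul_add, smul_sub]
  rw [Finset.sum_sub_distrib, Finset.sum_add_distrib]
  have h3 : ∑ j ∈ range (n + 1),
      (j.factorial : ℂ)⁻¹ • ((j : ℂ) • T ((Q ^ (j - 1)) (X ^ n : Polynomial ℂ)))
      = ∑ i ∈ range n, (i.factorial : ℂ)⁻¹ • T ((Q ^ i) (X ^ n : Polynomial ℂ)) := by
    rw [Finset.sum_range_succ']
    simp only [Nat.cast_zero, zero_smul, smul_zero, add_zero]
    refine Finset.sum_congr rfl fun i _ => ?_
    rw [Nat.add_sub_cancel, smul_smul]
    congr 1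
    rw [Nat.factorial_succ]
    push_cast
    rw [mul_inv]
    field_simp
  have h2' : ∑ j ∈ range (n + 1),
      (j.factorial : ℂ)⁻¹ • T ((Q ^ j) (X ^ n : Polynomial ℂ))
      = ∑ i ∈ range n, (i.factorial : ℂ)⁻¹ • T ((Q ^ i) (X ^ n : Polynomial ℂ)) := by
    rw [Finset.sum_range_succ, hTQn, smul_zero, add_zero]
  rw [h3, h2', add_sub_cancel_right, Finset.smul_sum]
  exact Finset.sum_congr rfl fun j _ => smul_comm _ _ _

end
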